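/- Let X : ℝⁿ → ℝⁿ be a C¹ vector field, f(x) = ½‖X(x)‖², and F(x) = DX(x) − (DX(x))ᵀ. If x : I → ℝⁿ is a solution of the flow equation x′(t) = X(x(t)) on an open interval I, then x satisfies the geometric dynamics equation x″(t) = ∇f(x(t)) + F(x(t)) (x′(t)) for all t ∈ I. -/

import Mathlib

open InnerProductSpace

/-- A solution of the flow `x' = X(x)` of a C¹ vector field satisfies the
geometric dynamics equation `x'' = ∇f(x) + F(x)(x')`, where `f = ½‖X‖²` is the energy
and `F = DX - (DX)ᵀ` is the external tensor field. -/
theorem flow_solution_geometric_dynamics {n : ℕ}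
    (X : EuclideanSpace ℝ (Fin n) → EuclideanSpace ℝ (Fin n))
    (hX : ContDiff ℝ 1 X)
    (f : EuclideanSpace ℝ (Fin n) → ℝ)
    (hf : ∀ x, f x = (1 / 2) * ‖X x‖ ^ 2)
    (F : EuclideanSpace ℝ (Fin n) →
      EuclideanSpace ℝ (Fin n) →L[ℝ] EuclideanSpace ℝ (Fin n))
    (hF : ∀ x, F x = fderiv ℝ X x - ContinuousLinearMap.adjoint (fderiv ℝ X x))
    (a b : ℝ) (c : ℝ → EuclideanSpace ℝ (Fin n))
    (hc : ∀ t ∈ Set.Ioo a b, HasDerivAt c (X (c t)) t) :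
    ∀ t ∈ Set.Ioo a b,
      HasDerivAt (deriv c) (gradient f (c t) + F (c t) (deriv c t)) t := by
  intro t ht
  have hXd : Differentiable ℝ X := hX.differentiable one_ne_zero
  set x := c t with hx
  set A := fderiv ℝ X x with hA
  -- deriv c t = X (c t)
  have hderiv : ∀ s ∈ Set.Ioo a b, deriv c s = X (c s) := fun s hs => (hc s hs).deriv
  -- gradient computation
  have hgrad : HasGradientAt f (ContinuousLinearMap.adjoint A (X x)) x := by
    rw [hasGradientAt_iff_hasFDerivAt]
    have h1 : HasFDerivAt (fun y => ⟪X y, X y⟫_ℝ)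
        ((innerSL ℝ (X x)).comp A + (innerSL ℝ (X x)).comp A) x := by
      have := (hXd x).hasFDerivAt.inner ℝ (hXd x).hasFDerivAt
      refine this.congr_fderiv ?_
      ext v
      simp only [ContinuousLinearMap.add_apply, ContinuousLinearMap.coe_comp',
        Function.comp_apply, innerSL_apply_apply, fderivInnerCLM_apply,
        ContinuousLinearMap.prod_apply, real_inner_comm, ← hA]
    have h2 : HasFDerivAt f
        ((1/2 : ℝ) • ((innerSL ℝ (X x)).comp A + (innerSL ℝ (X x)).comp A)) x := by
      have := h1.const_smul (1/2 : ℝ)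
      refine this.congr_of_eventuallyEq ?_
      filter_upwards with y
      simp only [hf y, real_inner_self_eq_norm_sq, smul_eq_mul, Pi.smul_apply]
    refine h2.congr_fderiv ?_
    ext v
    simp only [ContinuousLinearMap.coe_smul', Pi.smul_apply,
      ContinuousLinearMap.add_apply, ContinuousLinearMap.coe_comp',
      Function.comp_apply, innerSL_apply_apply, smul_eq_mul]
    rw [InnerProductSpace.toDual_apply_apply, ContinuousLinearMap.adjoint_inner_left]
    ring
  -- second derivative
  have hXc : HasDerivAt (fun s => X (c s)) (A (X x)) t :=
    ((hXd x).hasFDerivAt.comp_hasDerivAt t (hc t ht))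
  have heq : deriv c =ᶠ[nhds t] fun s => X (c s) := by
    filter_upwards [Ioo_mem_nhds ht.1 ht.2] with s hs using hderiv s hs
  have hd2 : HasDerivAt (deriv c) (A (X x)) t := hXc.congr_of_eventuallyEq heq
  have : gradient f x + F x (deriv c t) = A (X x) := by
    rw [hgrad.gradient, hF, hderiv t ht]
    simp [← hx, ← hA]
  rwa [this]
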